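/- Let Q be a bounded, positive, self-adjoint operator on a complex Hilbert space H, let γ > 0 and let T be a positive even integer with γ‖Q‖ ≤ 1, and let p ≥ 0. Then ‖Q^{p} R̄_T(Q)‖ ≤ (2p/e)^{p} (γT)^{−p} (with the convention 0^0 = 1); in particular ‖R̄_T(Q)‖ ≤ 1. -/

import Mathlib

/-- Fractional power `A^r` (for `r : ℝ`) of a bounded operator, via the continuous
functional calculus for self-adjoint operators (real power `x ↦ x ^ r`). -/
noncomputable def opPow {H : Type*} [NormedAddCommGroup H] [InnerProductSpace ℂ H]
    [CompleteSpace H] (A : H →L[ℂ] H) (r : ℝ) : H →L[ℂ] H :=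
  cfc (fun x : ℝ => x ^ r) A

/-- The tail-averaged gradient-descent filter operator
`Ḡ_T(Q) = (2/T) ∑_{t=T/2+1}^{T} γ ∑_{k=0}^{t-1} (I - γQ)^k`. -/
noncomputable def Gbar {H : Type*} [NormedAddCommGroup H] [InnerProductSpace ℂ H]
    [CompleteSpace H] (γ : ℝ) (T : ℕ) (Q : H →L[ℂ] H) : H →L[ℂ] H :=
  (2 / (T : ℂ)) • ∑ t ∈ Finset.Ioc (T / 2) T,
    (γ : ℂ) • ∑ k ∈ Finset.range t, (1 - (γ : ℂ) • Q) ^ k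

/-- The tail-averaged gradient-descent residual operator
`R̄_T(Q) = (2/T) ∑_{t=T/2+1}^{T} (I - γQ)^t`. -/
noncomputable def Rbar {H : Type*} [NormedAddCommGroup H] [InnerProductSpace ℂ H]
    [CompleteSpace H] (γ : ℝ) (T : ℕ) (Q : H →L[ℂ] H) : H →L[ℂ] H :=
  (2 / (T : ℂ)) • ∑ t ∈ Finset.Ioc (T / 2) T, (1 - (γ : ℂ) • Q) ^ t

lemma key_exp_bound (x c p : ℝ) (hx : 0 ≤ x) (hc : 0 < c) (hp : 0 < p) :
    x ^ p * Real.exp (-(c * x)) ≤ (p / (c * Real.exp 1)) ^ p := by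
  have hbase : 0 < p / (c * Real.exp 1) := by positivity
  rcases hx.eq_or_lt with rfl | hx'
  · rw [Real.zero_rpow hp.ne']
    simpa using (Real.rpow_nonneg hbase.le p)
  · have hlog : Real.log (x * c / p) ≤ x * c / p - 1 :=
      Real.log_le_sub_one_of_pos (by positivity)
    have hlogx : Real.log (x * c / p) = Real.log x + Real.log c - Real.log p := by
      rw [Real.log_div (by positivity) hp.ne', Real.log_mul hx'.ne' hc.ne']
    have key : Real.log x * p - c * x ≤ Real.log (p / (c * Real.exp 1)) * p := by
      have hrhs : Real.log (p / (c * Real.exp 1)) = Real.log p - Real.log c - 1 := by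
        rw [Real.log_div hp.ne' (by positivity), Real.log_mul hc.ne' (Real.exp_pos 1).ne',
          Real.log_exp]
        ring
      rw [hrhs]
      rw [hlogx] at hlog
      have h2 := mul_le_mul_of_nonneg_right hlog hp.le
      have h3 : x * c / p * p = x * c := div_mul_cancel₀ _ hp.ne'
      nlinarith [h2, h3]
    calc x ^ p * Real.exp (-(c * x))
        = Real.exp (Real.log x * p - c * x) := by
          rw [Real.rpow_def_of_pos hx', ← Real.exp_add]; ring_nf
      _ ≤ Real.exp (Real.log (p / (c * Real.exp 1)) * p) := Real.exp_le_exp.mpr key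
      _ = (p / (c * Real.exp 1)) ^ p := (Real.rpow_def_of_pos hbase p).symm


lemma Rbar_eq_cfc {H : Type*} [NormedAddCommGroup H] [InnerProductSpace ℂ H]
    [CompleteSpace H] (γ : ℝ) (T : ℕ) (Q : H →L[ℂ] H) (hsa : IsSelfAdjoint Q) :
    Rbar γ T Q =
      cfc (fun x : ℝ =>
        (2 / (T : ℝ)) * ∑ t ∈ Finset.Ioc (T / 2) T, (1 - γ * x) ^ t) Q := by
  have e1 : cfc (fun x : ℝ => 1 - γ * x) Q = 1 - (γ : ℂ) • Q := by
    rw [cfc_sub (fun _ => (1 : ℝ)) (fun x => γ * x) Q (by fun_prop) (by fun_prop),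
      cfc_const_one ℝ Q, cfc_const_mul_id γ Q, Complex.coe_smul]
  have e2 : ∀ t : ℕ, (1 - (γ : ℂ) • Q) ^ t = cfc (fun x : ℝ => (1 - γ * x) ^ t) Q :=
    fun t => by rw [cfc_pow (fun x : ℝ => 1 - γ * x) t Q (by fun_prop), e1]
  have e3 : (2 / (T : ℂ)) = (((2 / (T : ℝ) : ℝ) : ℂ)) := by push_cast; ring
  symm
  calc cfc (fun x : ℝ =>
        (2 / (T : ℝ)) * ∑ t ∈ Finset.Ioc (T / 2) T, (1 - γ * x) ^ t) Q
      = (2 / (T : ℝ)) •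
          cfc (fun x : ℝ => ∑ t ∈ Finset.Ioc (T / 2) T, (1 - γ * x) ^ t) Q :=
        cfc_const_mul _ _ Q (by fun_prop)
    _ = (2 / (T : ℝ)) • ∑ t ∈ Finset.Ioc (T / 2) T,
          cfc (fun x : ℝ => (1 - γ * x) ^ t) Q := by
        rw [show (fun x : ℝ => ∑ t ∈ Finset.Ioc (T / 2) T, (1 - γ * x) ^ t)
            = ∑ t ∈ Finset.Ioc (T / 2) T, fun x : ℝ => (1 - γ * x) ^ t from by
              ext x; simp,
          cfc_sum _ Q _ (fun t _ => by fun_prop)]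
    _ = Rbar γ T Q := by
        rw [Rbar, e3, Complex.coe_smul]
        exact congrArg _ (Finset.sum_congr rfl fun t _ => (e2 t).symm)

/-- spectral residual bound for the tail-averaged GD filter;
Lemma 3 of Mücke–Neu–Rosasco with K = 3.
For a bounded positive self-adjoint operator `Q`, `γ > 0`, a positive even integer
`T` with `γ‖Q‖ ≤ 1`, and `p ≥ 0`:
`‖Q^p R̄_T(Q)‖ ≤ (2p/e)^p (γT)^{-p}` (with `0^0 = 1`), and `‖R̄_T(Q)‖ ≤ 1`. -/
theorem residual_operator_bound
    {H : Type*} [NormedAddCommGroup H] [InnerProductSpace ℂ H] [CompleteSpace H]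
    (Q : H →L[ℂ] H) (hQ : Q.IsPositive)
    (γ : ℝ) (T : ℕ) (hγ : 0 < γ) (hT : 0 < T) (hTeven : Even T)
    (hγQ : γ * ‖Q‖ ≤ 1) (p : ℝ) (hp : 0 ≤ p) :
    ‖opPow Q p * Rbar γ T Q‖ ≤
        (2 * p / Real.exp 1) ^ p * (γ * (T : ℝ)) ^ (-p) ∧
      ‖Rbar γ T Q‖ ≤ 1 := by
  obtain ⟨m, hm⟩ := hTeven
  have hm0 : 0 < m := by omega
  have hT2 : T / 2 = m := by omega
  have hsa : IsSelfAdjoint Q := hQ.isSelfAdjoint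
  set g : ℝ → ℝ := fun x =>
    (2 / (T : ℝ)) * ∑ t ∈ Finset.Ioc (T / 2) T, (1 - γ * x) ^ t with hg
  have hgc : ContinuousOn g (spectrum ℝ Q) := by fun_prop
  have hRbar : Rbar γ T Q = cfc g Q := Rbar_eq_cfc γ T Q hsa
  -- spectrum facts
  have hQ0 : (0 : H →L[ℂ] H) ≤ Q := (ContinuousLinearMap.nonneg_iff_isPositive Q).mpr hQ
  have hspec : ∀ x ∈ spectrum ℝ Q, 0 ≤ x ∧ γ * x ≤ 1 := by
    intro x hx
    refine ⟨spectrum_nonneg_of_nonneg hQ0 hx, ?_⟩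
    have h1 : ‖x‖ ≤ ‖Q‖ * ‖(1 : H →L[ℂ] H)‖ := spectrum.norm_le_norm_mul_of_mem hx
    have h2 : ‖(1 : H →L[ℂ] H)‖ ≤ 1 := ContinuousLinearMap.norm_id_le
    have h3 : x ≤ ‖Q‖ := by
      calc x ≤ ‖x‖ := Real.le_norm_self x
        _ ≤ ‖Q‖ * ‖(1 : H →L[ℂ] H)‖ := h1
        _ ≤ ‖Q‖ * 1 := by
            exact mul_le_mul_of_nonneg_left h2 (norm_nonneg Q)
        _ = ‖Q‖ := mul_one _
    calc γ * x ≤ γ * ‖Q‖ := mul_le_mul_of_nonneg_left h3 hγ.le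
      _ ≤ 1 := hγQ
  -- pointwise bounds on g
  have hgb : ∀ x ∈ spectrum ℝ Q, |g x| ≤ (1 - γ * x) ^ m ∧ (1 - γ * x) ^ m ≤ 1 := by
    intro x hx
    obtain ⟨hx0, hx1⟩ := hspec x hx
    have hb0 : 0 ≤ 1 - γ * x := by linarith
    have hb1 : 1 - γ * x ≤ 1 := by nlinarith [mul_nonneg hγ.le hx0]
    have hterm : ∀ t ∈ Finset.Ioc (T / 2) T, (1 - γ * x) ^ t ≤ (1 - γ * x) ^ m := by
      intro t ht
      simp only [Finset.mem_Ioc, hT2] at ht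
      exact pow_le_pow_of_le_one hb0 hb1 (le_of_lt ht.1)
    have hsum : ∑ t ∈ Finset.Ioc (T / 2) T, (1 - γ * x) ^ t ≤
        (m : ℝ) * (1 - γ * x) ^ m := by
      calc ∑ t ∈ Finset.Ioc (T / 2) T, (1 - γ * x) ^ t
          ≤ ∑ _t ∈ Finset.Ioc (T / 2) T, (1 - γ * x) ^ m := Finset.sum_le_sum hterm
        _ = (m : ℝ) * (1 - γ * x) ^ m := by
            rw [Finset.sum_const, Nat.card_Ioc, nsmul_eq_mul]
            congr 2
            omega
    have hgpos : 0 ≤ g x := by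
      apply mul_nonneg (by positivity)
      exact Finset.sum_nonneg fun t _ => pow_nonneg hb0 t
    have hTm : (T : ℝ) = 2 * m := by rw [hm]; push_cast; ring
    constructor
    · rw [abs_of_nonneg hgpos, hg]
      calc (2 / (T : ℝ)) * ∑ t ∈ Finset.Ioc (T / 2) T, (1 - γ * x) ^ t
          ≤ (2 / (T : ℝ)) * ((m : ℝ) * (1 - γ * x) ^ m) := by
            exact mul_le_mul_of_nonneg_left hsum (by positivity)
        _ = (1 - γ * x) ^ m := by
            rw [hTm]; field_simp
    · exact pow_le_one₀ hb0 hb1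
  -- second part
  have hRb1 : ‖Rbar γ T Q‖ ≤ 1 := by
    rw [hRbar]
    refine norm_cfc_le zero_le_one fun x hx => ?_
    rw [Real.norm_eq_abs]
    exact ((hgb x hx).1).trans (hgb x hx).2
  refine ⟨?_, hRb1⟩
  rcases hp.eq_or_lt with rfl | hp'
  · have : opPow Q (0 : ℝ) = 1 := by
      rw [opPow]
      simp only [Real.rpow_zero]
      exact cfc_const_one ℝ Q
    rw [this, one_mul]
    simpa using hRb1
  · -- main bound
    have hpc : ContinuousOn (fun x : ℝ => x ^ p) (spectrum ℝ Q) :=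
      (Real.continuous_rpow_const hp).continuousOn
    have hmul : opPow Q p * Rbar γ T Q = cfc (fun x : ℝ => x ^ p * g x) Q := by
      rw [opPow, hRbar, ← cfc_mul _ _ Q hpc hgc]
    rw [hmul]
    have hC : (0 : ℝ) ≤ (2 * p / Real.exp 1) ^ p * (γ * (T : ℝ)) ^ (-p) := by positivity
    refine norm_cfc_le hC fun x hx => ?_
    obtain ⟨hx0, hx1⟩ := hspec x hx
    have hb0 : 0 ≤ 1 - γ * x := by linarith
    have hc : (0 : ℝ) < γ * m := by positivity
    -- |x^p * g x| ≤ x^p * (1-γx)^m ≤ x^p * exp(-(γ m x)) ≤ (p/(γ m e))^p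
    have hexp : (1 - γ * x) ^ m ≤ Real.exp (-(γ * m * x)) := by
      have h1 : 1 - γ * x ≤ Real.exp (-(γ * x)) := by
        have := Real.add_one_le_exp (-(γ * x))
        linarith
      calc (1 - γ * x) ^ m ≤ Real.exp (-(γ * x)) ^ m :=
            pow_le_pow_left₀ hb0 h1 m
        _ = Real.exp (-(γ * m * x)) := by
            rw [← Real.exp_nat_mul]; ring_nf
    have hgx : |g x| ≤ Real.exp (-(γ * m * x)) := ((hgb x hx).1).trans hexp
    have hxp : (0 : ℝ) ≤ x ^ p := Real.rpow_nonneg hx0 p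
    have hbound : ‖x ^ p * g x‖ ≤ x ^ p * Real.exp (-(γ * ↑m * x)) := by
      rw [Real.norm_eq_abs, abs_mul, abs_of_nonneg hxp]
      exact mul_le_mul_of_nonneg_left hgx hxp
    refine hbound.trans ?_
    have hKey := key_exp_bound x (γ * m) p hx0 hc hp'
    refine hKey.trans_eq ?_
    -- (p/(γ m e))^p = (2p/e)^p * (γ T)^{-p}
    have hγT : (0 : ℝ) < γ * (T : ℝ) := by
      have : (0 : ℝ) < (T : ℝ) := by exact_mod_cast hT
      positivity
    rw [Real.rpow_neg hγT.le, ← Real.inv_rpow hγT.le,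
      ← Real.mul_rpow (by positivity) (by positivity)]
    congr 1
    have hTm : (T : ℝ) = 2 * m := by rw [hm]; push_cast; ring
    rw [hTm]
    field_simp
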